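/- Let 𝒢=(𝒱,ℰ) be a directed graph and let {G_ij}_{(i,j)∈ℰ} be a collection of matrices with G_ijᵀ·G_ij = I_d for all (i,j)∈ℰ (orthogonal matrices). For x₀ ∈ ℝ^{nd}, partition x(t) = exp(−t·Z(𝒢,{G_ij}))·x₀ into blocks x_1(t),…,x_n(t) ∈ ℝ^d. Then the function t ↦ max_i ‖x_i(t)‖² is nonincreasing on [0,∞); in particular, for every ε>0 there exists δ>0 such that ‖x₀‖ < δ implies ‖x(t)‖ < ε for all t ≥ 0 (i.e., −Z(𝒢,{G_ij}) is critically stable). -/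

import Mathlib

open Matrix Kronecker

/-- An edge-indexed collection `G` of invertible matrices is *transitively consistent*
for the graph with vertex set `Fin n` and edge set `E` if it extends to a collection
indexed by all ordered pairs that is transitively consistent for the complete graph. -/
def TransConsistent (n d : ℕ) (E : Finset (Fin n × Fin n))
    (G : Fin n → Fin n → Matrix (Fin d) (Fin d) ℝ) : Prop :=
  ∃ Gc : Fin n → Fin n → Matrix (Fin d) (Fin d) ℝ,
    (∀ i j, IsUnit (Gc i j)) ∧
    (∀ i j k, Gc i k = Gc i j * Gc j k) ∧
    (∀ i j, (i, j) ∈ E → Gc i j = G i j)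

/-- The graph is connected: any two nodes are joined by an undirected path. -/
def UConnected (n : ℕ) (E : Finset (Fin n × Fin n)) : Prop :=
  ∀ i j : Fin n, Relation.ReflTransGen (fun a b => (a, b) ∈ E ∨ (b, a) ∈ E) i j

/-- The graph is quasi-strongly connected: it has a center, i.e. a node reachable
from every node by a directed path. -/
def QSC (n : ℕ) (E : Finset (Fin n × Fin n)) : Prop :=
  ∃ c : Fin n, ∀ i : Fin n, Relation.ReflTransGen (fun a b => (a, b) ∈ E) i c

/-- The `Z`-matrix: the `(i,i)` block is `|N_i| • I_d`; for `i ≠ j` the `(i,j)` block is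
`-G i j` if `(i,j)` is an edge and `0` otherwise. -/
def Zmat (n d : ℕ) (E : Finset (Fin n × Fin n))
    (G : Fin n → Fin n → Matrix (Fin d) (Fin d) ℝ) :
    Matrix (Fin n × Fin d) (Fin n × Fin d) ℝ :=
  fun p q =>
    if p.1 = q.1 then
      ((E.filter fun e => e.1 = p.1).card : ℝ) * (if p.2 = q.2 then 1 else 0)
    else if (p.1, q.1) ∈ E then -G p.1 q.1 p.2 q.2 else 0

/-- The `H`-matrix: the `(i,i)` block is `|N_i| • I_d + ∑_{k : (k,i) ∈ E} (G k i)ᵀ * G k i`;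
for `i ≠ j` the `(i,j)` block is `-[(i,j) ∈ E] • G i j - [(j,i) ∈ E] • (G j i)ᵀ`. -/
def Hmat (n d : ℕ) (E : Finset (Fin n × Fin n))
    (G : Fin n → Fin n → Matrix (Fin d) (Fin d) ℝ) :
    Matrix (Fin n × Fin d) (Fin n × Fin d) ℝ :=
  fun p q =>
    if p.1 = q.1 then
      ((E.filter fun e => e.1 = p.1).card : ℝ) * (if p.2 = q.2 then 1 else 0)
        + ∑ k : Fin n, (if (k, p.1) ∈ E then ((G k p.1)ᵀ * G k p.1) p.2 q.2 else 0)
    else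
      (if (p.1, q.1) ∈ E then -G p.1 q.1 p.2 q.2 else 0)
        + (if (q.1, p.1) ∈ E then -(G q.1 p.1)ᵀ p.2 q.2 else 0)

/-- Adjacency matrix of the graph. -/
def adjMat (n : ℕ) (E : Finset (Fin n × Fin n)) : Matrix (Fin n) (Fin n) ℝ :=
  fun i j => if (i, j) ∈ E then 1 else 0

/-- Graph Laplacian `L = diag(A·1) - A`. -/
def lapMat (n : ℕ) (E : Finset (Fin n × Fin n)) : Matrix (Fin n) (Fin n) ℝ :=
  Matrix.diagonal (fun i => ∑ j, adjMat n E i j) - adjMat n E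

/-- Block diagonal matrix `diag(G 1, …, G n)` with `d × d` blocks. -/
def blkDiag (n d : ℕ) (G : Fin n → Matrix (Fin d) (Fin d) ℝ) :
    Matrix (Fin n × Fin d) (Fin n × Fin d) ℝ :=
  fun p q => if p.1 = q.1 then G p.1 p.2 q.2 else 0

/-- `U₁({G_i})`: the block column matrix stacking `(G 1)⁻ᵀ, …, (G n)⁻ᵀ`. -/
noncomputable def U1 (n d : ℕ) (G : Fin n → Matrix (Fin d) (Fin d) ℝ) :
    Matrix (Fin n × Fin d) (Fin d) ℝ :=
  fun p c => ((G p.1)⁻¹)ᵀ p.2 c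

/-- The `i`-th `d × d` block of a block column matrix `X ∈ ℝ^{nd × d}`. -/
def blk (n d : ℕ) (X : Matrix (Fin n × Fin d) (Fin d) ℝ) (i : Fin n) :
    Matrix (Fin d) (Fin d) ℝ :=
  fun a b => X (i, a) b

/-- Frobenius norm of a real matrix. -/
noncomputable def frob {m k : Type*} [Fintype m] [Fintype k] (M : Matrix m k ℝ) : ℝ :=
  Real.sqrt (∑ i, ∑ j, (M i j) ^ 2)

/-- Squared Frobenius norm of a real matrix. -/
def frobSq {m k : Type*} [Fintype m] [Fintype k] (M : Matrix m k ℝ) : ℝ :=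
  ∑ i, ∑ j, (M i j) ^ 2

/-- Euclidean norm on `ℝ^m`. -/
noncomputable def euclNorm {m : Type*} [Fintype m] (x : m → ℝ) : ℝ :=
  Real.sqrt (∑ i, (x i) ^ 2)

namespace Stab10

noncomputable def ee (d : ℕ) : (Fin d → ℝ) →ₗ[ℝ] EuclideanSpace ℝ (Fin d) :=
  (WithLp.linearEquiv 2 ℝ (Fin d → ℝ)).symm.toLinearMap

lemma ee_apply {d : ℕ} (v : Fin d → ℝ) (a : Fin d) : ee d v a = v a := rfl

lemma norm_ee {d : ℕ} (v : Fin d → ℝ) : ‖ee d v‖ = Real.sqrt (∑ a, v a ^ 2) := by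
  rw [EuclideanSpace.norm_eq]
  congr 1
  refine Finset.sum_congr rfl fun a _ => ?_
  rw [ee_apply, Real.norm_eq_abs, sq_abs]

lemma norm_ee_sq {d : ℕ} (v : Fin d → ℝ) : ‖ee d v‖ ^ 2 = ∑ a, v a ^ 2 := by
  rw [norm_ee, Real.sq_sqrt (Finset.sum_nonneg fun a _ => sq_nonneg _)]

noncomputable def blkE (n d : ℕ) (x : Fin n × Fin d → ℝ) (i : Fin n) :
    EuclideanSpace ℝ (Fin d) :=
  ee d (fun a => x (i, a))

lemma blkE_norm_sq {n d : ℕ} (x : Fin n × Fin d → ℝ) (i : Fin n) :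
    ‖blkE n d x i‖ ^ 2 = ∑ a, x (i, a) ^ 2 := norm_ee_sq _

lemma norm_ee_mulVec {d : ℕ} (M : Matrix (Fin d) (Fin d) ℝ) (hM : Mᵀ * M = 1)
    (v : Fin d → ℝ) : ‖ee d (M *ᵥ v)‖ = ‖ee d v‖ := by
  rw [norm_ee, norm_ee]
  congr 1
  have h1 : ∀ w : Fin d → ℝ, ∑ a, w a ^ 2 = w ⬝ᵥ w := by
    intro w; simp [dotProduct, sq]
  rw [h1, h1]
  calc (M *ᵥ v) ⬝ᵥ (M *ᵥ v) = ((M *ᵥ v) ᵥ* M) ⬝ᵥ v := Matrix.dotProduct_mulVec _ _ _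
    _ = (Mᵀ *ᵥ (M *ᵥ v)) ⬝ᵥ v := by rw [Matrix.mulVec_transpose]
    _ = v ⬝ᵥ v := by rw [Matrix.mulVec_mulVec, hM, Matrix.one_mulVec]

/-- one-step contraction for `A = c•1 - Z`. -/
lemma step {n d : ℕ} (E : Finset (Fin n × Fin n))
    (G : Fin n → Fin n → Matrix (Fin d) (Fin d) ℝ)
    (hG : ∀ i j, (i, j) ∈ E → (G i j)ᵀ * G i j = 1)
    (M : ℝ) (hM : 0 ≤ M) (y : Fin n × Fin d → ℝ)
    (hy : ∀ j, ‖blkE n d y j‖ ≤ M) (i : Fin n) :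
    ‖blkE n d (((E.card : ℝ) • (1 : Matrix (Fin n × Fin d) (Fin n × Fin d) ℝ)
        - Zmat n d E G) *ᵥ y) i‖ ≤ (E.card : ℝ) * M := by
  set c : ℝ := (E.card : ℝ) with hc
  set deg : ℝ := ((E.filter fun e => e.1 = i).card : ℝ) with hdeg
  have hdc : deg ≤ c := by
    rw [hdeg, hc]
    exact_mod_cast Finset.card_le_card (Finset.filter_subset _ _)
  set T : Finset (Fin n) := Finset.univ.filter (fun j => ¬ j = i ∧ (i, j) ∈ E) with hT
  have hTdeg : (T.card : ℝ) ≤ deg := by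
    rw [hdeg]
    have : T.card ≤ (E.filter fun e => e.1 = i).card := by
      refine Finset.card_le_card_of_injOn (fun j => (i, j)) ?_ ?_
      · intro j hj
        rw [hT, Finset.coe_filter] at hj
        exact Finset.mem_filter.mpr ⟨hj.2.2, rfl⟩
      · intro a _ b _ h
        exact (Prod.mk.injEq _ _ _ _).mp h |>.2
    exact_mod_cast this
  -- the block identity
  have hZ : ∀ a : Fin d, (Zmat n d E G *ᵥ y) (i, a)
      = deg * y (i, a) - ∑ j ∈ T, (G i j *ᵥ fun b => y (j, b)) a := by
    intro a
    have hsum : (Zmat n d E G *ᵥ y) (i, a)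
        = ∑ j : Fin n, ∑ b : Fin d, Zmat n d E G (i, a) (j, b) * y (j, b) := by
      rw [Matrix.mulVec, dotProduct, Fintype.sum_prod_type]
    rw [hsum]
    have hterm : ∀ j : Fin n, (∑ b : Fin d, Zmat n d E G (i, a) (j, b) * y (j, b))
        = (if j = i then deg * y (i, a) else 0)
          + (if ¬ j = i ∧ (i, j) ∈ E then -((G i j *ᵥ fun b => y (j, b)) a) else 0) := by
      intro j
      by_cases h : j = i
      · subst h
        simp [Zmat, ite_mul, mul_ite, Finset.sum_ite_eq, ← hdeg]
      · have h' : ¬ (i = j) := fun hh => h hh.symm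
        by_cases h2 : (i, j) ∈ E
        · simp [Zmat, h, h', h2, Matrix.mulVec, dotProduct, neg_mul, Finset.sum_neg_distrib]
        · simp [Zmat, h, h', h2]
    rw [Finset.sum_congr rfl (fun j _ => hterm j), Finset.sum_add_distrib]
    rw [Finset.sum_ite_eq' Finset.univ i (fun _ => deg * y (i, a)), if_pos (Finset.mem_univ i)]
    rw [← Finset.sum_filter, ← hT]
    rw [Finset.sum_neg_distrib]
    ring
  have hid : blkE n d ((((E.card : ℝ)) • (1 : Matrix (Fin n × Fin d) (Fin n × Fin d) ℝ)
        - Zmat n d E G) *ᵥ y) i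
      = (c - deg) • blkE n d y i + ∑ j ∈ T, ee d (G i j *ᵥ fun b => y (j, b)) := by
    unfold blkE
    rw [← _root_.map_smul, ← map_sum, ← map_add]
    congr 1
    funext a
    have happ : ((((E.card : ℝ)) • (1 : Matrix (Fin n × Fin d) (Fin n × Fin d) ℝ)
        - Zmat n d E G) *ᵥ y) (i, a) = c * y (i, a) - (Zmat n d E G *ᵥ y) (i, a) := by
      rw [Matrix.sub_mulVec, Matrix.smul_mulVec, Matrix.one_mulVec]
      rfl
    rw [happ, hZ a]
    simp only [Pi.add_apply, Pi.smul_apply, Finset.sum_apply, smul_eq_mul]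
    ring
  rw [hid]
  calc ‖(c - deg) • blkE n d y i + ∑ j ∈ T, ee d (G i j *ᵥ fun b => y (j, b))‖
      ≤ ‖(c - deg) • blkE n d y i‖ + ‖∑ j ∈ T, ee d (G i j *ᵥ fun b => y (j, b))‖ :=
        norm_add_le _ _
    _ ≤ (c - deg) * M + (T.card : ℝ) * M := by
        gcongr
        · rw [norm_smul, Real.norm_eq_abs, abs_of_nonneg (by linarith)]
          have := hy i
          have h0 : (0:ℝ) ≤ c - deg := by linarith
          calc (c - deg) * ‖blkE n d y i‖ ≤ (c - deg) * M := by
                exact mul_le_mul_of_nonneg_left (hy i) h0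
            _ = (c - deg) * M := rfl
        · calc ‖∑ j ∈ T, ee d (G i j *ᵥ fun b => y (j, b))‖
              ≤ ∑ j ∈ T, ‖ee d (G i j *ᵥ fun b => y (j, b))‖ := norm_sum_le _ _
            _ ≤ ∑ j ∈ T, M := by
                refine Finset.sum_le_sum fun j hj => ?_
                rw [hT, Finset.mem_filter] at hj
                rw [norm_ee_mulVec _ (hG i j hj.2.2)]
                exact hy j
            _ = (T.card : ℝ) * M := by rw [Finset.sum_const, nsmul_eq_mul]
    _ ≤ (c - deg) * M + deg * M := by nlinarith
    _ = c * M := by ring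

lemma exp_smul_one {m : Type*} [Fintype m] [DecidableEq m] (r : ℝ) :
    NormedSpace.exp (r • (1 : Matrix m m ℝ)) = Real.exp r • (1 : Matrix m m ℝ) := by
  letI : SeminormedRing (Matrix m m ℝ) := Matrix.linftyOpSemiNormedRing
  letI : NormedRing (Matrix m m ℝ) := Matrix.linftyOpNormedRing
  letI : NormedAlgebra ℝ (Matrix m m ℝ) := Matrix.linftyOpNormedAlgebra
  rw [NormedSpace.exp_eq_tsum ℝ]
  have h1 : ∀ k : ℕ, ((k.factorial : ℝ))⁻¹ • (r • (1 : Matrix m m ℝ)) ^ k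
      = (((k.factorial : ℝ))⁻¹ * r ^ k) • (1 : Matrix m m ℝ) := by
    intro k; rw [smul_pow, one_pow, smul_smul]
  simp only [h1]
  have hsum : Summable (fun k : ℕ => ((k.factorial : ℝ))⁻¹ * r ^ k) := by
    simpa [smul_eq_mul] using NormedSpace.expSeries_summable' (𝕂 := ℝ) r
  rw [hsum.tsum_smul_const]
  congr 1
  rw [Real.exp_eq_exp_ℝ, NormedSpace.exp_eq_tsum ℝ]
  simp [smul_eq_mul]

/-- the block map `M ↦ (M *ᵥ x)_i` as a linear map. -/
noncomputable def blkMapL (n d : ℕ) (x : Fin n × Fin d → ℝ) (i : Fin n) :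
    Matrix (Fin n × Fin d) (Fin n × Fin d) ℝ →ₗ[ℝ] EuclideanSpace ℝ (Fin d) where
  toFun M := blkE n d (M *ᵥ x) i
  map_add' A B := by
    have h : (fun a => ((A + B) *ᵥ x) (i, a))
        = (fun a => (A *ᵥ x) (i, a)) + (fun a => (B *ᵥ x) (i, a)) := by
      funext a; simp [Matrix.add_mulVec]
    show ee d (fun a => ((A + B) *ᵥ x) (i, a))
        = ee d (fun a => (A *ᵥ x) (i, a)) + ee d (fun a => (B *ᵥ x) (i, a))
    rw [h, map_add]
  map_smul' r A := by
    have h : (fun a => ((r • A) *ᵥ x) (i, a)) = r • (fun a => (A *ᵥ x) (i, a)) := by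
      funext a; simp [Matrix.smul_mulVec]
    show ee d (fun a => ((r • A) *ᵥ x) (i, a)) = r • ee d (fun a => (A *ᵥ x) (i, a))
    rw [h, _root_.map_smul]

/-- contraction of the block norms under `exp (-t Z)`. -/
lemma key {n d : ℕ} (E : Finset (Fin n × Fin n))
    (G : Fin n → Fin n → Matrix (Fin d) (Fin d) ℝ)
    (hG : ∀ i j, (i, j) ∈ E → (G i j)ᵀ * G i j = 1)
    {t : ℝ} (ht : 0 ≤ t) (x : Fin n × Fin d → ℝ)
    (M : ℝ) (hM : 0 ≤ M) (hx : ∀ j, ‖blkE n d x j‖ ≤ M) (i : Fin n) :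
    ‖blkE n d ((NormedSpace.exp (-t • Zmat n d E G)) *ᵥ x) i‖ ≤ M := by
  letI : SeminormedRing (Matrix (Fin n × Fin d) (Fin n × Fin d) ℝ) :=
    Matrix.linftyOpSemiNormedRing
  letI : NormedRing (Matrix (Fin n × Fin d) (Fin n × Fin d) ℝ) := Matrix.linftyOpNormedRing
  letI : NormedAlgebra ℝ (Matrix (Fin n × Fin d) (Fin n × Fin d) ℝ) :=
    Matrix.linftyOpNormedAlgebra
  set Z := Zmat n d E G with hZdef
  set c : ℝ := (E.card : ℝ) with hc
  have hc0 : 0 ≤ c := Nat.cast_nonneg _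
  set A : Matrix (Fin n × Fin d) (Fin n × Fin d) ℝ := c • 1 - Z with hA
  -- powers bound
  have hpow : ∀ (k : ℕ) (j : Fin n), ‖blkE n d ((A ^ k) *ᵥ x) j‖ ≤ c ^ k * M := by
    intro k
    induction k with
    | zero =>
      intro j
      simpa [Matrix.one_mulVec] using hx j
    | succ k ih =>
      intro j
      have hstep := step E G hG (c ^ k * M) (by positivity) ((A ^ k) *ᵥ x) ih j
      rw [pow_succ']
      rw [← Matrix.mulVec_mulVec]
      calc ‖blkE n d (A *ᵥ ((A ^ k) *ᵥ x)) j‖ ≤ c * (c ^ k * M) := hstep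
        _ = c ^ (k + 1) * M := by ring
  -- split the exponential
  have hsplit : -t • Z = (-(t * c)) • (1 : Matrix (Fin n × Fin d) (Fin n × Fin d) ℝ) + t • A := by
    rw [hA]
    module
  have hcomm : Commute ((-(t * c)) • (1 : Matrix (Fin n × Fin d) (Fin n × Fin d) ℝ)) (t • A) :=
    ((Commute.one_left (t • A)).smul_left _)
  have hexp : NormedSpace.exp (-t • Z)
      = Real.exp (-(t * c)) • NormedSpace.exp (t • A) := by
    rw [hsplit, Matrix.exp_add_of_commute _ _ hcomm, exp_smul_one, smul_mul_assoc, one_mul]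
  -- series bound for exp (t • A)
  have hsummable : Summable (fun k : ℕ => ((k.factorial : ℝ))⁻¹ • (t • A) ^ k) :=
    NormedSpace.expSeries_summable' (𝕂 := ℝ) (t • A)
  have hs : HasSum (fun k : ℕ => ((k.factorial : ℝ))⁻¹ • (t • A) ^ k)
      (NormedSpace.exp (t • A)) := by
    rw [NormedSpace.exp_eq_tsum ℝ]
    exact hsummable.hasSum
  set φ := LinearMap.toContinuousLinearMap (blkMapL n d x i) with hφ
  have hs2 : HasSum (fun k : ℕ => φ (((k.factorial : ℝ))⁻¹ • (t • A) ^ k))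
      (φ (NormedSpace.exp (t • A))) := φ.hasSum hs
  have hnorm : ∀ k : ℕ, ‖φ (((k.factorial : ℝ))⁻¹ • (t • A) ^ k)‖
      ≤ ((k.factorial : ℝ))⁻¹ * (t * c) ^ k * M := by
    intro k
    have h1 : ((k.factorial : ℝ))⁻¹ • (t • A) ^ k
        = (((k.factorial : ℝ))⁻¹ * t ^ k) • A ^ k := by rw [smul_pow, smul_smul]
    rw [h1, _root_.map_smul, norm_smul, Real.norm_eq_abs]
    have h2 : ‖φ (A ^ k)‖ ≤ c ^ k * M := hpow k i
    have h3 : |((k.factorial : ℝ))⁻¹ * t ^ k| = ((k.factorial : ℝ))⁻¹ * t ^ k := by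
      apply abs_of_nonneg; positivity
    rw [h3]
    calc ((k.factorial : ℝ))⁻¹ * t ^ k * ‖φ (A ^ k)‖
        ≤ ((k.factorial : ℝ))⁻¹ * t ^ k * (c ^ k * M) := by
          apply mul_le_mul_of_nonneg_left h2; positivity
      _ = ((k.factorial : ℝ))⁻¹ * (t * c) ^ k * M := by ring
  have hu : HasSum (fun k : ℕ => ((k.factorial : ℝ))⁻¹ * (t * c) ^ k * M)
      (Real.exp (t * c) * M) := by
    have h4 : HasSum (fun k : ℕ => ((k.factorial : ℝ))⁻¹ * (t * c) ^ k) (Real.exp (t * c)) := by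
      have h5 := (NormedSpace.expSeries_summable' (𝕂 := ℝ) (t * c)).hasSum
      rw [Real.exp_eq_exp_ℝ, NormedSpace.exp_eq_tsum ℝ]
      simpa [smul_eq_mul] using h5
    exact h4.mul_right M
  have hbound : ‖φ (NormedSpace.exp (t • A))‖ ≤ Real.exp (t * c) * M := by
    rw [← hs2.tsum_eq]
    exact tsum_of_norm_bounded hu hnorm
  -- conclude
  have hφexp : blkE n d ((NormedSpace.exp (-t • Z)) *ᵥ x) i
      = Real.exp (-(t * c)) • φ (NormedSpace.exp (t • A)) := by
    rw [hexp, ← _root_.map_smul]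
    rfl
  rw [hφexp, norm_smul, Real.norm_eq_abs, abs_of_pos (Real.exp_pos _)]
  calc Real.exp (-(t * c)) * ‖φ (NormedSpace.exp (t • A))‖
      ≤ Real.exp (-(t * c)) * (Real.exp (t * c) * M) := by
        apply mul_le_mul_of_nonneg_left hbound (le_of_lt (Real.exp_pos _))
    _ = M := by
        rw [← mul_assoc, ← Real.exp_add]
        simp


end Stab10

/-- for orthogonal edge matrices, along solutions `x(t) = exp(-tZ)x₀` of
`ẋ = -Zx` the function `t ↦ max_i ‖x_i(t)‖²` is nonincreasing on `[0,∞)`; in particular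
`-Z` is critically stable. -/
theorem stmt10 (n d : ℕ) (hn : 0 < n) (E : Finset (Fin n × Fin n))
    (G : Fin n → Fin n → Matrix (Fin d) (Fin d) ℝ)
    (hG : ∀ i j, (i, j) ∈ E → (G i j)ᵀ * G i j = 1) :
    (∀ x₀ : Fin n × Fin d → ℝ, ∀ s t : ℝ, 0 ≤ s → s ≤ t →
      (⨆ i : Fin n, ∑ a : Fin d,
        ((NormedSpace.exp (-t • Zmat n d E G)).mulVec x₀ (i, a)) ^ 2) ≤
      (⨆ i : Fin n, ∑ a : Fin d,
        ((NormedSpace.exp (-s • Zmat n d E G)).mulVec x₀ (i, a)) ^ 2)) ∧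
    (∀ ε : ℝ, 0 < ε → ∃ δ : ℝ, 0 < δ ∧ ∀ x₀ : Fin n × Fin d → ℝ, euclNorm x₀ < δ →
      ∀ t : ℝ, 0 ≤ t →
        euclNorm ((NormedSpace.exp (-t • Zmat n d E G)).mulVec x₀) < ε) := by
  haveI : Nonempty (Fin n) := ⟨⟨0, hn⟩⟩
  constructor
  · intro x₀ s t hs0 hst
    set Z := Zmat n d E G with hZdef
    set ys := (NormedSpace.exp (-s • Z)).mulVec x₀ with hys
    have hts : -t • Z = -(t - s) • Z + -s • Z := by
      rw [← add_smul]; ring_nf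
    have hyt : (NormedSpace.exp (-t • Z)).mulVec x₀
        = (NormedSpace.exp (-(t - s) • Z)).mulVec ys := by
      letI : SeminormedRing (Matrix (Fin n × Fin d) (Fin n × Fin d) ℝ) :=
        Matrix.linftyOpSemiNormedRing
      letI : NormedRing (Matrix (Fin n × Fin d) (Fin n × Fin d) ℝ) := Matrix.linftyOpNormedRing
      letI : NormedAlgebra ℝ (Matrix (Fin n × Fin d) (Fin n × Fin d) ℝ) :=
        Matrix.linftyOpNormedAlgebra
      have hcomm : Commute ((-(t - s)) • Z) ((-s) • Z) :=
        ((Commute.refl Z).smul_left _).smul_right _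
      rw [hys, Matrix.mulVec_mulVec, hts, Matrix.exp_add_of_commute _ _ hcomm]
    set N := ⨆ j, ‖Stab10.blkE n d ys j‖ with hN
    have hbdd : BddAbove (Set.range fun j => ‖Stab10.blkE n d ys j‖) :=
      (Set.finite_range _).bddAbove
    have hNub : ∀ j, ‖Stab10.blkE n d ys j‖ ≤ N := fun j => le_ciSup hbdd j
    have hN0 : 0 ≤ N := le_trans (norm_nonneg _) (hNub ⟨0, hn⟩)
    have hkey : ∀ i, ‖Stab10.blkE n d ((NormedSpace.exp (-(t - s) • Z)).mulVec ys) i‖ ≤ N :=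
      fun i => Stab10.key E G hG (sub_nonneg.mpr hst) ys N hN0 hNub i
    obtain ⟨j₀, hj₀⟩ := exists_eq_ciSup_of_finite (f := fun j => ‖Stab10.blkE n d ys j‖)
    apply ciSup_le
    intro i
    have h1 : ∑ a : Fin d, ((NormedSpace.exp (-t • Z)).mulVec x₀ (i, a)) ^ 2
        = ‖Stab10.blkE n d ((NormedSpace.exp (-(t - s) • Z)).mulVec ys) i‖ ^ 2 := by
      rw [Stab10.blkE_norm_sq, hyt]
    rw [h1]
    calc ‖Stab10.blkE n d ((NormedSpace.exp (-(t - s) • Z)).mulVec ys) i‖ ^ 2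
        ≤ N ^ 2 := pow_le_pow_left₀ (norm_nonneg _) (hkey i) 2
      _ = ∑ a : Fin d, (ys (j₀, a)) ^ 2 := by rw [hN, ← hj₀, Stab10.blkE_norm_sq]
      _ ≤ ⨆ i : Fin n, ∑ a : Fin d, (ys (i, a)) ^ 2 :=
          le_ciSup (f := fun i : Fin n => ∑ a : Fin d, (ys (i, a)) ^ 2)
            ((Set.finite_range _).bddAbove) j₀
  · intro ε hε
    refine ⟨ε / (Real.sqrt n + 1), by positivity, ?_⟩
    intro x₀ hx₀ t ht
    set Z := Zmat n d E G with hZdef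
    set y := (NormedSpace.exp (-t • Z)).mulVec x₀ with hy
    have hx0nn : 0 ≤ euclNorm x₀ := Real.sqrt_nonneg _
    have hb : ∀ j, ‖Stab10.blkE n d x₀ j‖ ≤ euclNorm x₀ := by
      intro j
      rw [show ‖Stab10.blkE n d x₀ j‖ = Real.sqrt (∑ a, x₀ (j, a) ^ 2) from Stab10.norm_ee _,
        euclNorm]
      apply Real.sqrt_le_sqrt
      rw [Fintype.sum_prod_type]
      exact Finset.single_le_sum (f := fun i => ∑ a, x₀ (i, a) ^ 2)
        (fun i _ => Finset.sum_nonneg fun a _ => sq_nonneg _) (Finset.mem_univ j)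
    have hkey : ∀ i, ‖Stab10.blkE n d y i‖ ≤ euclNorm x₀ :=
      fun i => Stab10.key E G hG ht x₀ (euclNorm x₀) hx0nn hb i
    have h2 : euclNorm y ≤ Real.sqrt n * euclNorm x₀ := by
      rw [euclNorm, Fintype.sum_prod_type]
      have h3 : ∑ i : Fin n, ∑ a : Fin d, y (i, a) ^ 2 ≤ (n : ℝ) * euclNorm x₀ ^ 2 := by
        calc ∑ i : Fin n, ∑ a : Fin d, y (i, a) ^ 2
            = ∑ i : Fin n, ‖Stab10.blkE n d y i‖ ^ 2 :=
              Finset.sum_congr rfl fun i _ => (Stab10.blkE_norm_sq _ _).symm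
          _ ≤ ∑ _i : Fin n, euclNorm x₀ ^ 2 := Finset.sum_le_sum fun i _ =>
              pow_le_pow_left₀ (norm_nonneg _) (hkey i) 2
          _ = (n : ℝ) * euclNorm x₀ ^ 2 := by rw [Finset.sum_const, nsmul_eq_mul]; simp
      calc Real.sqrt (∑ i : Fin n, ∑ a : Fin d, y (i, a) ^ 2)
          ≤ Real.sqrt ((n : ℝ) * euclNorm x₀ ^ 2) := Real.sqrt_le_sqrt h3
        _ = Real.sqrt n * euclNorm x₀ := by
            rw [Real.sqrt_mul (Nat.cast_nonneg _), Real.sqrt_sq hx0nn]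
    have hsn : 0 < Real.sqrt n := Real.sqrt_pos.mpr (by exact_mod_cast hn)
    calc euclNorm y ≤ Real.sqrt n * euclNorm x₀ := h2
      _ < Real.sqrt n * (ε / (Real.sqrt n + 1)) := mul_lt_mul_of_pos_left hx₀ hsn
      _ ≤ ε := by
          rw [show Real.sqrt n * (ε / (Real.sqrt n + 1))
              = ε * (Real.sqrt n / (Real.sqrt n + 1)) by ring]
          exact mul_le_of_le_one_right hε.le
            (div_le_one_of_le₀ (by linarith) (by positivity))
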